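/- (Concavity of the missed-detection exponent) Define E_md(R, E) := E + (1 − E/D)·J(R/(1 − E/D)) on the region {(R,E) : 0 ≤ R ≤ C, 0 ≤ E ≤ (1 − R/C)·D}, with the convention E_md(0, D) = D. Then E_md is jointly concave on this region. -/

import Mathlib

/-- Concavity of the missed-detection exponent: for a channel with capacity `C > 0`,
maximal divergence `D > 0`, and two-phase exponent function `J` (concave, non-increasing,
bounded by `D`, with `J(0) = D`), the function
`E_md(R, E) := E + (1 − E/D) J(R/(1 − E/D))` (with the convention `E_md(0, D) = D`) is
jointly concave on the region `{(R, E) : 0 ≤ R ≤ C, 0 ≤ E ≤ (1 − R/C) D}`. -/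
theorem Emd_concave (C D : ℝ) (hC : 0 < C) (hD : 0 < D)
    (J : ℝ → ℝ)
    (hJconc : ConcaveOn ℝ (Set.Iic C) J)
    (hJanti : AntitoneOn J (Set.Iic C))
    (hJle : ∀ R, J R ≤ D) (hJ0 : J 0 = D) :
    ConcaveOn ℝ {p : ℝ × ℝ | 0 ≤ p.1 ∧ p.1 ≤ C ∧ 0 ≤ p.2 ∧ p.2 ≤ (1 - p.1 / C) * D}
      (fun p => p.2 +
        (if p.2 = D then 0 else (1 - p.2 / D) * J (p.1 / (1 - p.2 / D)))) := by
  have hDne : D ≠ 0 := hD.ne'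
  have heq : (fun p : ℝ × ℝ => p.2 +
      (if p.2 = D then 0 else (1 - p.2 / D) * J (p.1 / (1 - p.2 / D))))
      = (fun p : ℝ × ℝ => p.2 + (1 - p.2 / D) * J (p.1 / (1 - p.2 / D))) := by
    funext p
    split_ifs with h
    · rw [h, div_self hDne]
      simp
    · rfl
  rw [heq]
  constructor
  · -- convexity of the region
    intro p hp q hq a b ha hb hab
    obtain ⟨hR1, hR1C, hE1, hE1b⟩ := hp
    obtain ⟨hR2, hR2C, hE2, hE2b⟩ := hq
    refine ⟨?_, ?_, ?_, ?_⟩ <;>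
      simp only [Prod.fst_add, Prod.snd_add, Prod.smul_fst, Prod.smul_snd, smul_eq_mul]
    · nlinarith
    · nlinarith
    · nlinarith
    · have h1 := mul_le_mul_of_nonneg_left hE1b ha
      have h2 := mul_le_mul_of_nonneg_left hE2b hb
      have hkey : a * ((1 - p.1 / C) * D) + b * ((1 - q.1 / C) * D)
          = (1 - (a * p.1 + b * q.1) / C) * D := by
        field_simp
        linear_combination C * hab
      linarith
  · -- the concavity inequality
    intro p hp q hq a b ha hb hab
    obtain ⟨hR1, hR1C, hE1, hE1b⟩ := hp
    obtain ⟨hR2, hR2C, hE2, hE2b⟩ := hq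
    simp only [Prod.fst_add, Prod.snd_add, Prod.smul_fst, Prod.smul_snd, smul_eq_mul]
    set t1 := 1 - p.2 / D with ht1def
    set t2 := 1 - q.2 / D with ht2def
    -- basic facts
    have hk1 : p.1 / C + p.2 / D ≤ 1 := by
      have := (div_le_iff₀ hD).mpr hE1b
      linarith
    have hk2 : q.1 / C + q.2 / D ≤ 1 := by
      have := (div_le_iff₀ hD).mpr hE2b
      linarith
    have ht1 : 0 ≤ t1 := by
      have : 0 ≤ p.1 / C := div_nonneg hR1 hC.le
      rw [ht1def]; linarith
    have ht2 : 0 ≤ t2 := by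
      have : 0 ≤ q.1 / C := div_nonneg hR2 hC.le
      rw [ht2def]; linarith
    have hR1t : p.1 ≤ t1 * C := by
      have h1 : p.1 / C ≤ t1 := by rw [ht1def]; linarith
      calc p.1 = p.1 / C * C := (div_mul_cancel₀ _ hC.ne').symm
        _ ≤ t1 * C := mul_le_mul_of_nonneg_right h1 hC.le
    have hR2t : q.1 ≤ t2 * C := by
      have h1 : q.1 / C ≤ t2 := by rw [ht2def]; linarith
      calc q.1 = q.1 / C * C := (div_mul_cancel₀ _ hC.ne').symm
        _ ≤ t2 * C := mul_le_mul_of_nonneg_right h1 hC.le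
    have hx1 : p.1 / t1 ∈ Set.Iic C := by
      rcases eq_or_lt_of_le ht1 with h | h
      · simp [← h, hC.le]
      · exact Set.mem_Iic.mpr ((div_le_iff₀ h).mpr (by rw [mul_comm] at hR1t; exact hR1t))
    have hx2 : q.1 / t2 ∈ Set.Iic C := by
      rcases eq_or_lt_of_le ht2 with h | h
      · simp [← h, hC.le]
      · exact Set.mem_Iic.mpr ((div_le_iff₀ h).mpr (by rw [mul_comm] at hR2t; exact hR2t))
    -- rewrite combined slack
    have hT : 1 - (a * p.2 + b * q.2) / D = a * t1 + b * t2 := by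
      rw [ht1def, ht2def]
      field_simp
      linear_combination (-D) * hab
    rw [hT]
    -- the perspective inequality
    have hmain : a * (t1 * J (p.1 / t1)) + b * (t2 * J (q.1 / t2))
        ≤ (a * t1 + b * t2) * J ((a * p.1 + b * q.1) / (a * t1 + b * t2)) := by
      have hat : 0 ≤ a * t1 := mul_nonneg ha ht1
      have hbt : 0 ≤ b * t2 := mul_nonneg hb ht2
      have hs : 0 ≤ a * t1 + b * t2 := add_nonneg hat hbt
      rcases eq_or_lt_of_le hs with h | h
      · have h1 : a * t1 = 0 := by linarith
        have h2 : b * t2 = 0 := by linarith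
        have e : a * (t1 * J (p.1 / t1)) + b * (t2 * J (q.1 / t2))
            = (a * t1) * J (p.1 / t1) + (b * t2) * J (q.1 / t2) := by ring
        rw [e, h1, h2]
        simp
      · set s := a * t1 + b * t2 with hsdef
        have hsne : s ≠ 0 := h.ne'
        have hw1 : 0 ≤ a * t1 / s := div_nonneg hat h.le
        have hw2 : 0 ≤ b * t2 / s := div_nonneg hbt h.le
        have hsum : a * t1 / s + b * t2 / s = 1 := by
          rw [← add_div, hsdef, div_self hsne]
        have hconc := hJconc.2 hx1 hx2 hw1 hw2 hsum
        simp only [smul_eq_mul] at hconc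
        have e1 : a * t1 / s * (p.1 / t1) = a * p.1 / s := by
          rcases eq_or_lt_of_le ht1 with h' | h'
          · have hp0 : p.1 = 0 := le_antisymm (by rw [← h'] at hR1t; simpa using hR1t) hR1
            simp [← h', hp0]
          · field_simp
        have e2 : b * t2 / s * (q.1 / t2) = b * q.1 / s := by
          rcases eq_or_lt_of_le ht2 with h' | h'
          · have hq0 : q.1 = 0 := le_antisymm (by rw [← h'] at hR2t; simpa using hR2t) hR2
            simp [← h', hq0]
          · field_simp
        rw [e1, e2, ← add_div] at hconc
        have hmul := mul_le_mul_of_nonneg_left hconc h.le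
        have elhs : s * (a * t1 / s * J (p.1 / t1) + b * t2 / s * J (q.1 / t2))
            = a * (t1 * J (p.1 / t1)) + b * (t2 * J (q.1 / t2)) := by
          field_simp
        rw [elhs] at hmul
        exact hmul
    have expand : a * (p.2 + t1 * J (p.1 / t1)) + b * (q.2 + t2 * J (q.1 / t2))
        = a * p.2 + b * q.2 + (a * (t1 * J (p.1 / t1)) + b * (t2 * J (q.1 / t2))) := by ring
    rw [expand]
    linarith
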